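/- Let f : ℝⁿ → ℝ be convex (finite everywhere) and let Φ : ℝⁿ → ℝ ∪ {+∞} be convex with nonempty domain. Let X ⊆ dom(Φ) be nonempty and convex, let x_k ∈ ℝⁿ and x_k* ∈ ∂f(x_k), and suppose x_{k+1} ∈ argmin_{x ∈ X} { Φ(x) + D_f^{x_k*}(x_k, x) }. Then there exists a subgradient x_{k+1}* ∈ ∂f(x_{k+1}) such that for every y ∈ X: Φ(y) + D_f^{x_k*}(x_k, y) ≥ Φ(x_{k+1}) + D_f^{x_k*}(x_k, x_{k+1}) + D_f^{x_{k+1}*}(x_{k+1}, y). -/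

import Mathlib

open Matrix Finset

noncomputable section

/-- Euclidean dot product of two vectors. -/
def dot {n : ℕ} (x y : Fin n → ℝ) : ℝ := ∑ j, x j * y j

/-- Squared Euclidean norm of a vector. -/
def norm2Sq {n : ℕ} (x : Fin n → ℝ) : ℝ := ∑ j, x j ^ 2

/-- ℓ¹ norm of a vector. -/
def l1Norm {n : ℕ} (x : Fin n → ℝ) : ℝ := ∑ j, |x j|

/-- Squared Euclidean norm of the i-th row of a matrix. -/
def rowNormSq {m n : ℕ} (A : Matrix (Fin m) (Fin n) ℝ) (i : Fin m) : ℝ := ∑ j, A i j ^ 2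

/-- Squared Frobenius norm of a matrix. -/
def frobSq {m n : ℕ} (A : Matrix (Fin m) (Fin n) ℝ) : ℝ := ∑ i, ∑ j, A i j ^ 2

/-- Largest singular value (spectral norm) of a matrix:  sup over `x ≠ 0` of `‖Ax‖₂/‖x‖₂`. -/
def sigmaMax {m n : ℕ} (A : Matrix (Fin m) (Fin n) ℝ) : ℝ :=
  sSup {t : ℝ | ∃ x : Fin n → ℝ, x ≠ 0 ∧
    t = Real.sqrt (norm2Sq (A.mulVec x)) / Real.sqrt (norm2Sq x)}

/-- `σ̃_min(A)`: the minimum over nonzero column-submatrices `A_J` of the smallest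
singular value `σ_min(A_J) = min_{x ≠ 0, supp x ⊆ J} ‖Ax‖₂/‖x‖₂`. -/
def sigmaTildeMin {m n : ℕ} (A : Matrix (Fin m) (Fin n) ℝ) : ℝ :=
  sInf {t : ℝ | ∃ J : Finset (Fin n), (∃ i j, j ∈ J ∧ A i j ≠ 0) ∧
    ∃ x : Fin n → ℝ, x ≠ 0 ∧ (∀ j ∉ J, x j = 0) ∧
      t = Real.sqrt (norm2Sq (A.mulVec x)) / Real.sqrt (norm2Sq x)}

/-- `|x|_min`: the smallest absolute value of the nonzero entries of `x`. -/
def minAbs {n : ℕ} (x : Fin n → ℝ) : ℝ := sInf {t : ℝ | ∃ j, x j ≠ 0 ∧ t = |x j|}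

/-- Componentwise soft shrinkage operator `S_λ(x) = max{|x| - λ, 0}·sign(x)`. -/
def softShrink {n : ℕ} (lam : ℝ) (x : Fin n → ℝ) : Fin n → ℝ :=
  fun j => Real.sign (x j) * max (|x j| - lam) 0

/-- The objective `f(x) = λ‖x‖₁ + ½‖x‖₂²`. -/
def fObj {n : ℕ} (lam : ℝ) (x : Fin n → ℝ) : ℝ := lam * l1Norm x + norm2Sq x / 2

/-- `g` is a subgradient of `f` at `x`. -/
def IsSubgrad {n : ℕ} (f : (Fin n → ℝ) → ℝ) (x g : Fin n → ℝ) : Prop :=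
  ∀ y, f x + dot g (y - x) ≤ f y

/-- Bregman distance `D_f^{x*}(x, y) = f(y) - f(x) - ⟨x*, y - x⟩`. -/
def breg {n : ℕ} (f : (Fin n → ℝ) → ℝ) (xstar x y : Fin n → ℝ) : ℝ :=
  f y - f x - dot xstar (y - x)

namespace BregAux

variable {n : ℕ}

lemma dot_sub (a b c : Fin n → ℝ) : dot a (b - c) = dot a b - dot a c := by
  simp [dot, ← Finset.sum_sub_distrib, mul_sub]

lemma dot_add (a b c : Fin n → ℝ) : dot a (b + c) = dot a b + dot a c := by
  simp [dot, ← Finset.sum_add_distrib, mul_add]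

lemma dot_smul' (a : Fin n → ℝ) (s : ℝ) (v : Fin n → ℝ) :
    dot a (s • v) = s * dot a v := by
  simp only [dot, Pi.smul_apply, smul_eq_mul, Finset.mul_sum]
  exact Finset.sum_congr rfl fun j _ => by ring

/-- The set of difference quotients of `f` at `x0` in direction `d`. -/
def S (f : (Fin n → ℝ) → ℝ) (x0 d : Fin n → ℝ) : Set ℝ :=
  {s | ∃ t : ℝ, 0 < t ∧ s = (f (x0 + t • d) - f x0) / t}

/-- Directional derivative of `f` at `x0` in direction `d`. -/
def pfun (f : (Fin n → ℝ) → ℝ) (x0 d : Fin n → ℝ) : ℝ := sInf (S f x0 d)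

variable {f : (Fin n → ℝ) → ℝ} {x0 : Fin n → ℝ}

lemma slope_mono (hf : ConvexOn ℝ Set.univ f) (d : Fin n → ℝ) {t t' : ℝ}
    (ht : 0 < t) (htt' : t ≤ t') :
    (f (x0 + t • d) - f x0) / t ≤ (f (x0 + t' • d) - f x0) / t' := by
  have ht' : 0 < t' := lt_of_lt_of_le ht htt'
  set a := t / t' with ha
  have ha1 : a * t' = t := div_mul_cancel₀ t ht'.ne'
  have ha0 : 0 ≤ a := by positivity
  have ha2 : a ≤ 1 := (div_le_one ht').2 htt'
  have hcvx := hf.2 (Set.mem_univ x0) (Set.mem_univ (x0 + t' • d))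
      (by linarith : (0:ℝ) ≤ 1 - a) ha0 (by ring)
  have hveq : (1 - a) • x0 + a • (x0 + t' • d) = x0 + t • d := by
    funext j
    simp only [Pi.add_apply, Pi.smul_apply, smul_eq_mul]
    linear_combination (d j) * ha1
  rw [hveq] at hcvx
  simp only [smul_eq_mul] at hcvx
  rw [div_le_div_iff₀ ht ht']
  have h2 := mul_le_mul_of_nonneg_right hcvx ht'.le
  have e1 : ((1 - a) * f x0 + a * f (x0 + t' • d)) * t'
      = f x0 * t' - t * f x0 + t * f (x0 + t' • d) := by
    rw [← ha1]; ring
  linarith [h2, e1.le, e1.ge]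

lemma slope_lb (hf : ConvexOn ℝ Set.univ f) (d : Fin n → ℝ) {t : ℝ} (ht : 0 < t) :
    f x0 - f (x0 - d) ≤ (f (x0 + t • d) - f x0) / t := by
  have h1t : 0 < 1 + t := by linarith
  have hcvx : f ((t / (1 + t)) • (x0 - d) + (1 / (1 + t)) • (x0 + t • d))
      ≤ (t / (1 + t)) • f (x0 - d) + (1 / (1 + t)) • f (x0 + t • d) :=
    hf.2 (Set.mem_univ (x0 - d)) (Set.mem_univ (x0 + t • d))
      (by positivity) (by positivity) (by field_simp; ring)
  have hveq : (t / (1 + t)) • (x0 - d) + (1 / (1 + t)) • (x0 + t • d) = x0 := by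
    funext j
    simp only [Pi.add_apply, Pi.sub_apply, Pi.smul_apply, smul_eq_mul]
    field_simp
    ring
  rw [hveq] at hcvx
  simp only [smul_eq_mul] at hcvx
  rw [le_div_iff₀ ht]
  have c1 : t / (1 + t) * (1 + t) = t := div_mul_cancel₀ t h1t.ne'
  have c2 : 1 / (1 + t) * (1 + t) = 1 := div_mul_cancel₀ 1 h1t.ne'
  have h2 := mul_le_mul_of_nonneg_right hcvx h1t.le
  have e1 : (t / (1 + t) * f (x0 - d) + 1 / (1 + t) * f (x0 + t • d)) * (1 + t)
      = t * f (x0 - d) + f (x0 + t • d) := by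
    rw [mul_comm (t / (1+t)) (f (x0 - d)), mul_comm (1 / (1+t)) (f (x0 + t • d))]
    rw [add_mul, mul_assoc, mul_assoc, c1, c2]
    ring
  rw [e1] at h2
  nlinarith [h2]

lemma S_nonempty (d : Fin n → ℝ) : (S f x0 d).Nonempty :=
  ⟨(f (x0 + (1:ℝ) • d) - f x0) / 1, 1, one_pos, rfl⟩

lemma S_bddBelow (hf : ConvexOn ℝ Set.univ f) (d : Fin n → ℝ) : BddBelow (S f x0 d) := by
  refine ⟨f x0 - f (x0 - d), ?_⟩
  rintro s ⟨t, ht, rfl⟩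
  exact slope_lb hf d ht

lemma pfun_le_slope (hf : ConvexOn ℝ Set.univ f) (d : Fin n → ℝ) {t : ℝ} (ht : 0 < t) :
    pfun f x0 d ≤ (f (x0 + t • d) - f x0) / t :=
  csInf_le (S_bddBelow hf d) ⟨t, ht, rfl⟩

lemma pfun_le (hf : ConvexOn ℝ Set.univ f) (d : Fin n → ℝ) :
    pfun f x0 d ≤ f (x0 + d) - f x0 := by
  have := pfun_le_slope (x0 := x0) hf d one_pos
  simpa using this

lemma lb_le_pfun (hf : ConvexOn ℝ Set.univ f) (d : Fin n → ℝ) :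
    f x0 - f (x0 - d) ≤ pfun f x0 d :=
  le_csInf (S_nonempty d) (by rintro s ⟨t, ht, rfl⟩; exact slope_lb hf d ht)

lemma pfun_zero : pfun f x0 0 = 0 := by
  have hS : S f x0 0 = {0} := by
    ext s
    constructor
    · rintro ⟨t, ht, rfl⟩
      simp [smul_zero]
    · rintro rfl
      exact ⟨1, one_pos, by simp⟩
  rw [pfun, hS, csInf_singleton]

lemma pfun_smul (hf : ConvexOn ℝ Set.univ f) (d : Fin n → ℝ) {c : ℝ} (hc : 0 < c) :
    pfun f x0 (c • d) = c * pfun f x0 d := by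
  have key : ∀ t : ℝ, 0 < t →
      (f (x0 + t • (c • d)) - f x0) / t = c * ((f (x0 + (t * c) • d) - f x0) / (t * c)) := by
    intro t ht
    rw [smul_smul]
    field_simp
  apply le_antisymm
  · rw [← div_le_iff₀' hc]
    refine le_csInf (S_nonempty d) ?_
    rintro s ⟨t, ht, rfl⟩
    rw [div_le_iff₀' hc]
    have hmem : c * ((f (x0 + t • d) - f x0) / t) ∈ S f x0 (c • d) := by
      refine ⟨t / c, by positivity, ?_⟩
      rw [key (t / c) (by positivity)]
      rw [div_mul_cancel₀ t hc.ne']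
    exact csInf_le (S_bddBelow hf (c • d)) hmem
  · refine le_csInf (S_nonempty (c • d)) ?_
    rintro s ⟨t, ht, rfl⟩
    rw [key t ht]
    exact mul_le_mul_of_nonneg_left (pfun_le_slope (x0 := x0) hf d (t := t * c) (by positivity)) hc.le

lemma pfun_subadd (hf : ConvexOn ℝ Set.univ f) (d1 d2 : Fin n → ℝ) :
    pfun f x0 (d1 + d2) ≤ pfun f x0 d1 + pfun f x0 d2 := by
  have h : ∀ s1 ∈ S f x0 d1, ∀ s2 ∈ S f x0 d2, pfun f x0 (d1 + d2) ≤ s1 + s2 := by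
    rintro s1 ⟨t1, ht1, rfl⟩ s2 ⟨t2, ht2, rfl⟩
    set u := min t1 t2 with hu
    have hu0 : 0 < u := lt_min ht1 ht2
    set t := u / 2 with htdef
    have ht : 0 < t := by positivity
    have h2t : 2 * t = u := by rw [htdef]; ring
    have hmid : f (x0 + t • (d1 + d2))
        ≤ (1/2) * f (x0 + (2*t) • d1) + (1/2) * f (x0 + (2*t) • d2) := by
      have hcvx : f ((1/2 : ℝ) • (x0 + (2*t) • d1) + (1/2 : ℝ) • (x0 + (2*t) • d2))
          ≤ (1/2 : ℝ) • f (x0 + (2*t) • d1) + (1/2 : ℝ) • f (x0 + (2*t) • d2) :=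
        hf.2 (Set.mem_univ _) (Set.mem_univ _) (by norm_num) (by norm_num) (by norm_num)
      have hveq : (1/2 : ℝ) • (x0 + (2*t) • d1) + (1/2 : ℝ) • (x0 + (2*t) • d2)
          = x0 + t • (d1 + d2) := by
        funext j
        simp only [Pi.add_apply, Pi.smul_apply, smul_eq_mul]
        ring
      rw [hveq] at hcvx
      simpa using hcvx
    have hslope : (f (x0 + t • (d1 + d2)) - f x0) / t
        ≤ (f (x0 + (2*t) • d1) - f x0) / (2*t) + (f (x0 + (2*t) • d2) - f x0) / (2*t) := by
      rw [← add_div, div_le_div_iff₀ ht (by positivity)]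
      nlinarith [hmid, ht]
    have hm1 : (f (x0 + (2*t) • d1) - f x0) / (2*t) ≤ (f (x0 + t1 • d1) - f x0) / t1 := by
      apply slope_mono hf d1 (by positivity)
      rw [h2t]; exact min_le_left _ _
    have hm2 : (f (x0 + (2*t) • d2) - f x0) / (2*t) ≤ (f (x0 + t2 • d2) - f x0) / t2 := by
      apply slope_mono hf d2 (by positivity)
      rw [h2t]; exact min_le_right _ _
    calc pfun f x0 (d1 + d2) ≤ (f (x0 + t • (d1 + d2)) - f x0) / t :=
          pfun_le_slope hf (d1 + d2) ht
      _ ≤ _ := by linarith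
  have h1 : ∀ s2 ∈ S f x0 d2, pfun f x0 (d1 + d2) - s2 ≤ pfun f x0 d1 := by
    intro s2 hs2
    refine le_csInf (S_nonempty d1) fun s1 hs1 => ?_
    linarith [h s1 hs1 s2 hs2]
  have h2 : pfun f x0 (d1 + d2) - pfun f x0 d1 ≤ pfun f x0 d2 := by
    refine le_csInf (S_nonempty d2) fun s2 hs2 => ?_
    linarith [h1 s2 hs2]
  linarith

end BregAux

namespace BregAux

/-- The perturbed set used to build the sandwiched sublinear functional. -/
def Tset {n : ℕ} (f Φ : (Fin n → ℝ) → ℝ) (X : Set (Fin n → ℝ))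
    (xkstar xk1 d : Fin n → ℝ) : Set ℝ :=
  {s | ∃ t : ℝ, 0 ≤ t ∧ ∃ y ∈ X, s = pfun f xk1 (d + t • (y - xk1))
      - t * (Φ xk1 - Φ y + dot xkstar (y - xk1))}

def pPrime {n : ℕ} (f Φ : (Fin n → ℝ) → ℝ) (X : Set (Fin n → ℝ))
    (xkstar xk1 d : Fin n → ℝ) : ℝ := sInf (Tset f Φ X xkstar xk1 d)

end BregAux

open BregAux in
/-- (Bregman three-point minimization lemma.) If `x_{k+1}` minimizes
`Φ(x) + D_f^{x_k*}(x_k, x)` over the nonempty convex set `X` (contained in the domain of the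
convex function `Φ`), then there is a subgradient `x_{k+1}* ∈ ∂f(x_{k+1})` with
`Φ(y) + D_f^{x_k*}(x_k, y) ≥ Φ(x_{k+1}) + D_f^{x_k*}(x_k, x_{k+1}) + D_f^{x_{k+1}*}(x_{k+1}, y)`
for all `y ∈ X`. -/
theorem bregman_minimization_lemma {n : ℕ} (f Φ : (Fin n → ℝ) → ℝ)
    (X : Set (Fin n → ℝ)) (hXne : X.Nonempty) (hXconv : Convex ℝ X)
    (hf : ConvexOn ℝ Set.univ f) (hΦ : ConvexOn ℝ X Φ)
    (xk xkstar : Fin n → ℝ) (hxk : IsSubgrad f xk xkstar)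
    (xk1 : Fin n → ℝ) (hmem : xk1 ∈ X)
    (hmin : ∀ x ∈ X, Φ xk1 + breg f xkstar xk xk1 ≤ Φ x + breg f xkstar xk x) :
    ∃ g : Fin n → ℝ, IsSubgrad f xk1 g ∧ ∀ y ∈ X,
      Φ xk1 + breg f xkstar xk xk1 + breg f g xk1 y ≤ Φ y + breg f xkstar xk y := by
  obtain ⟨y0, hy0⟩ := hXne
  -- Step 1: the minimality inequality in directional-derivative form
  have hq1 : ∀ y ∈ X, (Φ xk1 - Φ y + dot xkstar (y - xk1)) ≤ pfun f xk1 (y - xk1) := by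
    intro y hy
    have main : ∀ u : ℝ, 0 < u → u ≤ 1 →
        (Φ xk1 - Φ y + dot xkstar (y - xk1)) ≤ (f (xk1 + u • (y - xk1)) - f xk1) / u := by
      intro u hu hu1
      have hz : xk1 + u • (y - xk1) = (1 - u) • xk1 + u • y := by
        funext j
        simp only [Pi.add_apply, Pi.smul_apply, Pi.sub_apply, smul_eq_mul]
        ring
      have hzX : xk1 + u • (y - xk1) ∈ X := by
        rw [hz]; exact hXconv hmem hy (by linarith) hu.le (by ring)
      have hΦz : Φ (xk1 + u • (y - xk1)) ≤ (1 - u) * Φ xk1 + u * Φ y := by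
        rw [hz]
        have := hΦ.2 hmem hy (by linarith : (0:ℝ) ≤ 1 - u) hu.le (by ring)
        simpa using this
      have hminz := hmin _ hzX
      simp only [breg] at hminz
      have hd1 : dot xkstar (xk1 + u • (y - xk1) - xk)
          = dot xkstar (xk1 - xk) + u * dot xkstar (y - xk1) := by
        have e : xk1 + u • (y - xk1) - xk = (xk1 - xk) + u • (y - xk1) := by abel
        rw [e, dot_add, dot_smul']
      rw [hd1] at hminz
      rw [le_div_iff₀ hu]
      linarith [hminz, hΦz]
    refine le_csInf (S_nonempty _) ?_
    rintro s ⟨t, ht, rfl⟩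
    rcases le_or_gt t 1 with h1 | h1
    · exact main t ht h1
    · exact (main 1 one_pos le_rfl).trans (slope_mono hf _ one_pos h1.le)
  have hkey : ∀ t : ℝ, 0 ≤ t → ∀ y ∈ X,
      t * (Φ xk1 - Φ y + dot xkstar (y - xk1)) ≤ pfun f xk1 (t • (y - xk1)) := by
    intro t ht y hy
    rcases ht.eq_or_lt with heq | ht'
    · rw [← heq]
      simp [pfun_zero]
    · rw [pfun_smul hf _ ht']
      exact mul_le_mul_of_nonneg_left (hq1 y hy) ht
  -- Step 2: the perturbed sublinear functional
  set T := Tset f Φ X xkstar xk1 with hTdef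
  set p' := pPrime f Φ X xkstar xk1 with hp'def
  have hTne : ∀ d, (T d).Nonempty := fun d =>
    ⟨_, 0, le_rfl, y0, hy0, rfl⟩
  have hTlb : ∀ d, ∀ s ∈ T d, -(pfun f xk1 (-d)) ≤ s := by
    rintro d s ⟨t, ht, y, hy, rfl⟩
    have h1 := hkey t ht y hy
    have h2 : pfun f xk1 (t • (y - xk1))
        ≤ pfun f xk1 (d + t • (y - xk1)) + pfun f xk1 (-d) := by
      have h3 := pfun_subadd (x0 := xk1) hf (d + t • (y - xk1)) (-d)
      have heq : d + t • (y - xk1) + -d = t • (y - xk1) := by abel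
      rwa [heq] at h3
    linarith
  have hTbdd : ∀ d, BddBelow (T d) := fun d => ⟨_, hTlb d⟩
  have hp'_lb : ∀ d, -(pfun f xk1 (-d)) ≤ p' d := fun d => le_csInf (hTne d) (hTlb d)
  have hp'_le_pfun : ∀ d, p' d ≤ pfun f xk1 d := by
    intro d
    have hmemT : pfun f xk1 d ∈ T d := ⟨0, le_rfl, y0, hy0, by simp⟩
    exact csInf_le (hTbdd d) hmemT
  -- homogeneity
  have N_hom : ∀ c : ℝ, 0 < c → ∀ d, p' (c • d) = c * p' d := by
    intro c hc d
    have key : ∀ t : ℝ, ∀ y : Fin n → ℝ,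
        c * (pfun f xk1 (d + t • (y - xk1)) - t * (Φ xk1 - Φ y + dot xkstar (y - xk1)))
        = pfun f xk1 (c • d + (c * t) • (y - xk1))
          - (c * t) * (Φ xk1 - Φ y + dot xkstar (y - xk1)) := by
      intro t y
      have e : c • d + (c * t) • (y - xk1) = c • (d + t • (y - xk1)) := by
        funext j
        simp only [Pi.add_apply, Pi.smul_apply, Pi.sub_apply, smul_eq_mul]
        ring
      rw [e, pfun_smul hf _ hc]; ring
    apply le_antisymm
    · rw [← div_le_iff₀' hc]
      refine le_csInf (hTne d) ?_
      rintro s ⟨t, ht, y, hy, rfl⟩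
      rw [div_le_iff₀' hc, key t y]
      exact csInf_le (hTbdd _) ⟨c * t, by positivity, y, hy, rfl⟩
    · refine le_csInf (hTne (c • d)) ?_
      rintro s ⟨t, ht, y, hy, rfl⟩
      have e : c * (t / c) = t := by field_simp
      have hkey2 := key (t / c) y
      rw [e] at hkey2
      rw [← hkey2]
      have hmemT : pfun f xk1 (d + (t / c) • (y - xk1))
          - (t / c) * (Φ xk1 - Φ y + dot xkstar (y - xk1)) ∈ T d :=
        ⟨t / c, by positivity, y, hy, rfl⟩
      exact mul_le_mul_of_nonneg_left (csInf_le (hTbdd d) hmemT) hc.le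
  -- subadditivity
  have N_add : ∀ d1 d2, p' (d1 + d2) ≤ p' d1 + p' d2 := by
    intro d1 d2
    have h : ∀ s1 ∈ T d1, ∀ s2 ∈ T d2, p' (d1 + d2) ≤ s1 + s2 := by
      rintro s1 ⟨t1, ht1, y1, hy1, rfl⟩ s2 ⟨t2, ht2, y2, hy2, rfl⟩
      by_cases hts : t1 + t2 = 0
      · have ht1' : t1 = 0 := by linarith
        have ht2' : t2 = 0 := by linarith
        subst ht1'; subst ht2'
        simp only [zero_smul, add_zero, zero_mul, sub_zero]
        calc p' (d1 + d2) ≤ pfun f xk1 (d1 + d2) := hp'_le_pfun _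
          _ ≤ pfun f xk1 d1 + pfun f xk1 d2 := pfun_subadd hf _ _
      · have htpos : 0 < t1 + t2 := lt_of_le_of_ne (by linarith) (Ne.symm hts)
        have hne : t1 + t2 ≠ 0 := htpos.ne'
        set y' := (t1 / (t1 + t2)) • y1 + (t2 / (t1 + t2)) • y2 with hy'def
        have hsum : t1 / (t1 + t2) + t2 / (t1 + t2) = 1 := by field_simp
        have hy'X : y' ∈ X := hXconv hy1 hy2 (by positivity) (by positivity) hsum
        have hc1 : t1 • (y1 - xk1) + t2 • (y2 - xk1) = (t1 + t2) • (y' - xk1) := by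
          funext j
          simp only [hy'def, Pi.add_apply, Pi.smul_apply, Pi.sub_apply, smul_eq_mul]
          field_simp
          ring
        have e1 : (t1 + t2) * (t1 / (t1 + t2)) = t1 := by field_simp
        have e2 : (t1 + t2) * (t2 / (t1 + t2)) = t2 := by field_simp
        have hΦ' : Φ y' ≤ (t1 / (t1 + t2)) * Φ y1 + (t2 / (t1 + t2)) * Φ y2 := by
          have := hΦ.2 hy1 hy2 (by positivity : (0:ℝ) ≤ t1 / (t1 + t2))
            (by positivity : (0:ℝ) ≤ t2 / (t1 + t2)) hsum
          simpa [hy'def] using this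
        have hΦ'' : (t1 + t2) * Φ y' ≤ t1 * Φ y1 + t2 * Φ y2 := by
          have h5 := mul_le_mul_of_nonneg_left hΦ' htpos.le
          calc (t1 + t2) * Φ y' ≤ (t1 + t2) * ((t1 / (t1 + t2)) * Φ y1
              + (t2 / (t1 + t2)) * Φ y2) := h5
            _ = t1 * Φ y1 + t2 * Φ y2 := by
                rw [mul_add, ← mul_assoc, ← mul_assoc, e1, e2]
        have hdot : (t1 + t2) * dot xkstar (y' - xk1)
            = t1 * dot xkstar (y1 - xk1) + t2 * dot xkstar (y2 - xk1) := by
          have e : y' - xk1 = (t1 / (t1 + t2)) • (y1 - xk1)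
              + (t2 / (t1 + t2)) • (y2 - xk1) := by
            funext j
            simp only [hy'def, Pi.add_apply, Pi.smul_apply, Pi.sub_apply, smul_eq_mul]
            field_simp
            ring
          rw [e, dot_add, dot_smul', dot_smul', mul_add, ← mul_assoc, ← mul_assoc, e1, e2]
        have hQconc : t1 * (Φ xk1 - Φ y1 + dot xkstar (y1 - xk1))
            + t2 * (Φ xk1 - Φ y2 + dot xkstar (y2 - xk1))
            ≤ (t1 + t2) * (Φ xk1 - Φ y' + dot xkstar (y' - xk1)) := by
          nlinarith [hΦ'', hdot]
        have hpsub : pfun f xk1 (d1 + d2 + (t1 + t2) • (y' - xk1))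
            ≤ pfun f xk1 (d1 + t1 • (y1 - xk1)) + pfun f xk1 (d2 + t2 • (y2 - xk1)) := by
          have heq : d1 + d2 + (t1 + t2) • (y' - xk1)
              = (d1 + t1 • (y1 - xk1)) + (d2 + t2 • (y2 - xk1)) := by
            rw [← hc1]; abel
          rw [heq]; exact pfun_subadd hf _ _
        have hmemT : pfun f xk1 (d1 + d2 + (t1 + t2) • (y' - xk1))
            - (t1 + t2) * (Φ xk1 - Φ y' + dot xkstar (y' - xk1)) ∈ T (d1 + d2) :=
          ⟨t1 + t2, htpos.le, y', hy'X, rfl⟩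
        calc p' (d1 + d2) ≤ _ := csInf_le (hTbdd _) hmemT
          _ ≤ _ := by linarith
    have h1 : ∀ s2 ∈ T d2, p' (d1 + d2) - s2 ≤ p' d1 := by
      intro s2 hs2
      refine le_csInf (hTne d1) fun s1 hs1 => ?_
      linarith [h s1 hs1 s2 hs2]
    have h2 : p' (d1 + d2) - p' d1 ≤ p' d2 := by
      refine le_csInf (hTne d2) fun s2 hs2 => ?_
      linarith [h1 s2 hs2]
    linarith
  -- Step 3: Hahn-Banach
  have h0 : (0:ℝ) ≤ p' 0 := by
    have := hp'_lb 0
    rwa [neg_zero, pfun_zero, neg_zero] at this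
  have hf0 : ∀ x : (LinearMap.toPMap (0 : (Fin n → ℝ) →ₗ[ℝ] ℝ) ⊥).domain,
      (LinearMap.toPMap (0 : (Fin n → ℝ) →ₗ[ℝ] ℝ) ⊥) x ≤ p' x := by
    intro x
    have hx : (x : Fin n → ℝ) = 0 := (Submodule.mem_bot ℝ).1 x.2
    change (0 : (Fin n → ℝ) →ₗ[ℝ] ℝ) x ≤ p' x
    simp only [LinearMap.zero_apply]
    rw [hx]
    exact h0
  obtain ⟨L, -, hL⟩ := exists_extension_of_le_sublinear
      (LinearMap.toPMap (0 : (Fin n → ℝ) →ₗ[ℝ] ℝ) ⊥) p' N_hom N_add hf0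
  -- Step 4: extract the subgradient vector
  set g : Fin n → ℝ := fun j => L (fun i => if j = i then 1 else 0) with hgdef
  have hdotg : ∀ v : Fin n → ℝ, dot g v = L v := by
    intro v
    conv_rhs => rw [pi_eq_sum_univ v]
    rw [map_sum]
    simp only [_root_.map_smul, smul_eq_mul]
    simp [dot, hgdef, mul_comm]
  have hsub : IsSubgrad f xk1 g := by
    intro y
    have h1 : dot g (y - xk1) ≤ pfun f xk1 (y - xk1) := by
      rw [hdotg]
      exact (hL _).trans (hp'_le_pfun _)
    have h2 : pfun f xk1 (y - xk1) ≤ f (xk1 + (y - xk1)) - f xk1 := pfun_le hf _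
    have e : xk1 + (y - xk1) = y := by abel
    rw [e] at h2
    linarith
  have hlow : ∀ y ∈ X, Φ xk1 - Φ y + dot xkstar (y - xk1) ≤ dot g (y - xk1) := by
    intro y hy
    have h1 : L (-(y - xk1)) ≤ p' (-(y - xk1)) := hL _
    have hmemT : pfun f xk1 (-(y - xk1) + (1:ℝ) • (y - xk1))
        - 1 * (Φ xk1 - Φ y + dot xkstar (y - xk1)) ∈ T (-(y - xk1)) :=
      ⟨1, zero_le_one, y, hy, rfl⟩
    have h2 : p' (-(y - xk1)) ≤ pfun f xk1 (-(y - xk1) + (1:ℝ) • (y - xk1))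
        - 1 * (Φ xk1 - Φ y + dot xkstar (y - xk1)) := csInf_le (hTbdd _) hmemT
    have e : -(y - xk1) + (1:ℝ) • (y - xk1) = 0 := by
      rw [one_smul]; abel
    rw [e, pfun_zero, one_mul] at h2
    have h3 : L (-(y - xk1)) = -L (y - xk1) := map_neg L _
    rw [hdotg]
    linarith
  refine ⟨g, hsub, ?_⟩
  intro y hy
  have h4 := hlow y hy
  simp only [breg]
  have hd : dot xkstar (y - xk) - dot xkstar (xk1 - xk) = dot xkstar (y - xk1) := by
    rw [← dot_sub]
    congr 1
    abel
  linarith [h4, hd]
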